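/- Let X be an ultrametric space with a Borel measure ν, and let B be a ball of nonzero diameter with ν(B) < ∞ such that B is the union of its maximal proper subballs. Let τ be a complex-valued function on the set of subsets of X, and for distinct x, y ∈ X write S(x,y) = closedBall(x, dist(x,y)) (the smallest ball containing x and y). Define the pseudodifferential operator (Tf)(x) = ∫ τ(S(x,y)) · (f(x) − f(y)) dν(y). Let ψ : X → ℂ be a ν-integrable measurable function that vanishes outside B, has ∫ ψ dν = 0, and is constant on every maximal proper subball of B. Fix b ∈ B and assume the function y ↦ τ(closedBall(b, dist(b,y))) is ν-integrable on X \ B. Then for every x ∈ X the integral defining (Tψ)(x) converges and (Tψ)(x) = λ · ψ(x), where λ = τ(B)·ν(B) + ∫_{X \ B} τ(closedBall(b, dist(b,y))) dν(y); moreover λ does not depend on the choice of b ∈ B, since closedBall(b, dist(b,y)) = closedBall(b', dist(b',y)) for all b, b' ∈ B and y ∉ B. -/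

import Mathlib

open MeasureTheory

/-- A ball in a metric space: a closed ball of nonnegative radius. -/
def IsBall {X : Type*} [MetricSpace X] (B : Set X) : Prop :=
  ∃ (z : X) (r : ℝ), 0 ≤ r ∧ B = Metric.closedBall z r

/-- `B'` is a maximal proper subball of `B`. -/
def IsMaxSubball {X : Type*} [MetricSpace X] (B' B : Set X) : Prop :=
  IsBall B' ∧ B' ⊂ B ∧ ∀ B'' : Set X, IsBall B'' → ¬ (B' ⊂ B'' ∧ B'' ⊂ B)

/-- In an ultrametric space, any point of a closed ball is a center of it. -/
lemma recenter {X : Type*} [MetricSpace X]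
    (hultra : ∀ x y z : X, dist x y ≤ max (dist x z) (dist z y))
    {a c : X} {R : ℝ} (h : dist a c ≤ R) :
    Metric.closedBall a R = Metric.closedBall c R := by
  ext w
  simp only [Metric.mem_closedBall]
  constructor
  · intro hw
    calc dist w c ≤ max (dist w a) (dist a c) := hultra w c a
      _ ≤ R := max_le hw h
  · intro hw
    calc dist w a ≤ max (dist w c) (dist c a) := hultra w a c
      _ ≤ R := max_le hw (by rwa [dist_comm])

/-- Two points of a ball are at the same distance from any point outside the ball,
and that distance exceeds the radius. -/
lemma dist_eq_of_not_mem {X : Type*} [MetricSpace X]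
    (hultra : ∀ x y z : X, dist x y ≤ max (dist x z) (dist z y))
    {z : X} {r : ℝ} {b₁ b₂ y : X}
    (h₁ : b₁ ∈ Metric.closedBall z r) (h₂ : b₂ ∈ Metric.closedBall z r)
    (hy : y ∉ Metric.closedBall z r) :
    r < dist b₁ y ∧ dist b₁ y = dist b₂ y := by
  simp only [Metric.mem_closedBall] at h₁ h₂ hy
  push_neg at hy
  have hlt : ∀ c : X, dist c z ≤ r → r < dist c y := by
    intro c hc
    by_contra h
    push_neg at h
    exact absurd (le_trans (hultra y z c) (max_le (by rwa [dist_comm]) hc)) (not_le.2 hy)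
  have hle : ∀ c₁ c₂ : X, dist c₁ z ≤ r → dist c₂ z ≤ r → dist c₂ y ≤ dist c₁ y := by
    intro c₁ c₂ hc₁ hc₂
    have h21 : dist c₂ c₁ ≤ r :=
      le_trans (hultra c₂ c₁ z) (max_le hc₂ (by rwa [dist_comm]))
    calc dist c₂ y ≤ max (dist c₂ c₁) (dist c₁ y) := hultra c₂ y c₁
      _ = dist c₁ y := max_eq_right (h21.trans (hlt c₁ hc₁).le)
  exact ⟨hlt b₁ h₁, le_antisymm (hle b₂ b₁ h₂ h₁) (hle b₁ b₂ h₁ h₂)⟩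

theorem stmt_12 {X : Type*} [MetricSpace X] [MeasurableSpace X] [BorelSpace X]
    (hultra : ∀ x y z : X, dist x y ≤ max (dist x z) (dist z y))
    (ν : Measure X)
    (B : Set X) (hB : IsBall B) (hd : 0 < Metric.diam B) (hνB : ν B < ⊤)
    (hcover : B = ⋃₀ {C : Set X | IsMaxSubball C B})
    (τ : Set X → ℂ)
    (ψ : X → ℂ) (hψ : Integrable ψ ν)
    (hsupp : ∀ x ∉ B, ψ x = 0)
    (hmean : ∫ x, ψ x ∂ν = 0)
    (hconst : ∀ C : Set X, IsMaxSubball C B → ∀ x ∈ C, ∀ y ∈ C, ψ x = ψ y)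
    (b : X) (hb : b ∈ B)
    (hτ : IntegrableOn (fun y => τ (Metric.closedBall b (dist b y))) Bᶜ ν) :
    (∀ b' ∈ B, ∀ b'' ∈ B, ∀ y ∉ B,
        Metric.closedBall b' (dist b' y) = Metric.closedBall b'' (dist b'' y)) ∧
    ∀ x : X,
      Integrable (fun y => τ (Metric.closedBall x (dist x y)) * (ψ x - ψ y)) ν ∧
      ∫ y, τ (Metric.closedBall x (dist x y)) * (ψ x - ψ y) ∂ν
        = (τ B * ((ν B).toReal : ℂ)
            + ∫ y in Bᶜ, τ (Metric.closedBall b (dist b y)) ∂ν) * ψ x := by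
  obtain ⟨z, r, hr, hBeq⟩ := hB
  -- Part 1
  have part1 : ∀ b' ∈ B, ∀ b'' ∈ B, ∀ y ∉ B,
      Metric.closedBall b' (dist b' y) = Metric.closedBall b'' (dist b'' y) := by
    intro b' hb' b'' hb'' y hy
    rw [hBeq] at hb' hb'' hy
    obtain ⟨hlt, heq⟩ := dist_eq_of_not_mem hultra hb' hb'' hy
    rw [← heq]
    apply recenter hultra
    calc dist b' b'' ≤ max (dist b' z) (dist z b'') := hultra b' b'' z
      _ ≤ r := max_le hb' (by rw [dist_comm]; exact hb'')
      _ ≤ dist b' y := hlt.le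
  refine ⟨part1, ?_⟩
  have hBmeas : MeasurableSet B := by rw [hBeq]; exact Metric.isClosed_closedBall.measurableSet
  intro x
  by_cases hx : x ∈ B
  · -- x ∈ B : find the maximal subball containing x
    have hxU : x ∈ ⋃₀ {C : Set X | IsMaxSubball C B} := by rw [← hcover]; exact hx
    obtain ⟨C, hC, hxC⟩ := hxU
    obtain ⟨c, s, hs, hCball⟩ := hC.1
    have hCmeas : MeasurableSet C := by rw [hCball]; exact Metric.isClosed_closedBall.measurableSet
    have hCsub : C ⊆ B := hC.2.1.subset
    -- key pointwise identity
    have hkey : (fun y => τ (Metric.closedBall x (dist x y)) * (ψ x - ψ y))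
        = fun y => (B \ C).indicator (fun y => τ B * (ψ x - ψ y)) y
            + Bᶜ.indicator (fun y => τ (Metric.closedBall b (dist b y)) * ψ x) y := by
      funext y
      by_cases hyB : y ∈ B
      · have hyBc : y ∉ Bᶜ := fun h => h hyB
        by_cases hyC : y ∈ C
        · -- y ∈ C : both sides vanish
          have h1 : y ∉ B \ C := fun h => h.2 hyC
          rw [Set.indicator_of_notMem h1, Set.indicator_of_notMem hyBc,
            hconst C hC x hxC y hyC]
          ring
        · -- y ∈ B \ C : the smallest ball containing x and y is B
          rw [Set.indicator_of_mem (show y ∈ B \ C from ⟨hyB, hyC⟩), Set.indicator_of_notMem hyBc, add_zero]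
          have hCx : C = Metric.closedBall x s := by
            rw [hCball]
            apply recenter hultra
            rw [hCball] at hxC
            rw [dist_comm]
            exact hxC
          have hSB : Metric.closedBall x (dist x y) = B := by
            set R := dist x y with hR
            have hsR : s < R := by
              by_contra h
              push_neg at h
              exact hyC (by rw [hCx]; exact Metric.mem_closedBall.2 (by rw [dist_comm]; exact h))
            have hRr : R ≤ r := by
              rw [hBeq] at hx hyB
              calc R ≤ max (dist x z) (dist z y) := hultra x y z
                _ ≤ r := max_le hx (by rw [dist_comm]; exact hyB)
            have hSsub : Metric.closedBall x R ⊆ B := by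
              rw [hBeq] at hx ⊢
              intro w hw
              calc dist w z ≤ max (dist w x) (dist x z) := hultra w z x
                _ ≤ r := max_le ((Metric.mem_closedBall.1 hw).trans hRr) hx
            have hyS : y ∈ Metric.closedBall x R :=
              Metric.mem_closedBall.2 (by rw [dist_comm])
            have hCS : C ⊂ Metric.closedBall x R :=
              ⟨by rw [hCx]; exact Metric.closedBall_subset_closedBall hsR.le,
                fun hsub => hyC (hsub hyS)⟩
            by_contra hne2
            exact hC.2.2 (Metric.closedBall x R) ⟨x, R, dist_nonneg, rfl⟩
              ⟨hCS, hSsub, fun h => hne2 (hSsub.antisymm h)⟩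
          rw [hSB]
      · -- y ∉ B
        have h1 : y ∉ B \ C := fun h => hyB h.1
        rw [Set.indicator_of_notMem h1, Set.indicator_of_mem (show y ∈ Bᶜ from hyB), zero_add,
          hsupp y hyB, part1 x hx b hb y hyB, sub_zero]
    rw [hkey]
    -- integrability of the two pieces
    have hνBC : ν (B \ C) < ⊤ := lt_of_le_of_lt (measure_mono Set.diff_subset) hνB
    have hi1 : Integrable ((B \ C).indicator (fun y => τ B * (ψ x - ψ y))) ν := by
      apply IntegrableOn.integrable_indicator _ (hBmeas.diff hCmeas)
      apply Integrable.const_mul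
      exact (integrableOn_const hνBC.ne).sub hψ.integrableOn
    have hi2 : Integrable (Bᶜ.indicator (fun y => τ (Metric.closedBall b (dist b y)) * ψ x)) ν := by
      apply IntegrableOn.integrable_indicator _ hBmeas.compl
      exact hτ.mul_const _
    refine ⟨hi1.add hi2, ?_⟩
    rw [integral_add hi1 hi2, integral_indicator (hBmeas.diff hCmeas),
      integral_indicator hBmeas.compl]
    -- compute the integral over B \ C
    have hψC : ∫ y in C, ψ y ∂ν = (ν C).toReal • ψ x := by
      rw [setIntegral_congr_fun hCmeas
        (fun w hw => hconst C hC w hw x hxC : Set.EqOn ψ (fun _ => ψ x) C)]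
      exact setIntegral_const (ψ x)
    have hψB : ∫ y in B, ψ y ∂ν = 0 := by
      rw [setIntegral_eq_integral_of_forall_compl_eq_zero (fun w hw => hsupp w hw)]
      exact hmean
    have hψBC : ∫ y in B \ C, ψ y ∂ν = -((ν C).toReal • ψ x) := by
      rw [integral_diff hCmeas hψ.integrableOn hCsub, hψB, hψC, zero_sub]
    have h1 : ∫ y in B \ C, τ B * (ψ x - ψ y) ∂ν
        = τ B * ((ν (B \ C)).toReal • ψ x + (ν C).toReal • ψ x) := by
      rw [integral_const_mul]
      congr 1
      rw [integral_sub (integrableOn_const (C := ψ x) hνBC.ne) hψ.integrableOn, hψBC,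
        setIntegral_const, sub_neg_eq_add, measureReal_def]
    have h2 : ∫ y in Bᶜ, τ (Metric.closedBall b (dist b y)) * ψ x ∂ν
        = (∫ y in Bᶜ, τ (Metric.closedBall b (dist b y)) ∂ν) * ψ x := integral_mul_const _ _
    rw [h1, h2]
    have hsum : (ν (B \ C)).toReal + (ν C).toReal = (ν B).toReal := by
      rw [← ENNReal.toReal_add (ne_of_lt hνBC)
        (ne_of_lt (lt_of_le_of_lt (measure_mono hCsub) hνB)),
        ← measure_union disjoint_sdiff_self_left hCmeas, Set.diff_union_of_subset hCsub]
    have hmix : (ν (B \ C)).toReal • ψ x + (ν C).toReal • ψ x = ((ν B).toReal : ℂ) * ψ x := by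
      rw [← add_smul, hsum, Complex.real_smul]
    rw [hmix]
    ring
  · -- x ∉ B : ψ x = 0 and the integral vanishes
    have hψx : ψ x = 0 := hsupp x hx
    have hkey : (fun y => τ (Metric.closedBall x (dist x y)) * (ψ x - ψ y))
        = fun y => τ (Metric.closedBall x (dist x b)) * (0 - ψ y) := by
      funext y
      by_cases hyB : y ∈ B
      · have hdist : dist x y = dist x b := by
          rw [hBeq] at hyB hb hx
          rw [dist_comm x y, dist_comm x b, (dist_eq_of_not_mem hultra hyB hb hx).2]
        rw [hdist, hψx]
      · simp [hsupp y hyB, hψx]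
    rw [hkey, hψx, mul_zero]
    constructor
    · apply Integrable.const_mul
      exact hψ.neg.congr (Filter.Eventually.of_forall fun y => by simp)
    · rw [integral_const_mul]
      simp only [zero_sub, integral_neg, hmean, neg_zero, mul_zero]
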